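/- Rank-2 multiplicity-free Macdonald identity for the affine case a = b = 2: in the ring of formal power series ℤ[[x, y]] (x = e^{−α₀}, y = e^{−α₁}), with W the infinite dihedral group generated by s₀, s₁ acting by s₀: (α₀, α₁) ↦ (−α₀, α₁ + 2α₀), s₁: (α₀, α₁) ↦ (α₀ + 2α₁, −α₁), the identity ∑_{w ∈ W} w(1/((1−e^{−α₀})(1−e^{−α₁}))) = 1 + ∑_{n ≥ 1} e^{−nδ} holds, where δ = α₀ + α₁ and each summand w(1/((1−e^{−α₀})(1−e^{−α₁}))) is expanded via the highest-weight convention: w(1/(1−e^{−α}))⁻expansion is 1 + e^{−wα} + e^{−2wα} + ⋯ when wα is a positive root, and −e^{wα} − e^{2wα} − ⋯ when wα is negative. -/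

import Mathlib

/-! The rank-2 `multiplicity-free Macdonald identity' for affine `sl₂`.
Root lattice `ℤα₀ ⊕ ℤα₁`, Cartan matrix `[[2,-2],[-2,2]]`; a vector
`m α₀ + m' α₁` is the row vector `![m, m']`, the Weyl group element `w` acts by
`v ↦ Matrix.vecMul v w`; formal exponentials live in `ℤ[[x, y]]` with
`x = e^{-α₀}`, `y = e^{-α₁}`, so `e^{-(m α₀ + m' α₁)} = x^m y^{m'}`. -/

/-- The simple reflection `s₀`. -/
def affS₀ : (Matrix (Fin 2) (Fin 2) ℤ)ˣ :=
  ⟨!![-1, 0; 2, 1], !![-1, 0; 2, 1],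
    by rw [Matrix.mul_fin_two, Matrix.one_fin_two]; norm_num,
    by rw [Matrix.mul_fin_two, Matrix.one_fin_two]; norm_num⟩

/-- The simple reflection `s₁`. -/
def affS₁ : (Matrix (Fin 2) (Fin 2) ℤ)ˣ :=
  ⟨!![1, 2; 0, -1], !![1, 2; 0, -1],
    by rw [Matrix.mul_fin_two, Matrix.one_fin_two]; norm_num,
    by rw [Matrix.mul_fin_two, Matrix.one_fin_two]; norm_num⟩

open Classical in
/-- The `highest weight' expansion of `w (1/(1 - e^{-α}))` attached to the
root `β = w α`: the geometric series `1 + e^{-β} + e^{-2β} + ⋯` if `β > 0`,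
and `-e^{β} - e^{2β} - ⋯` if `β < 0`, as a power series in `x, y`. -/
noncomputable def hwExpand (β : Fin 2 → ℤ) : MvPowerSeries (Fin 2) ℤ :=
  if 0 ≤ β 0 ∧ 0 ≤ β 1 then
    (fun d : Fin 2 →₀ ℕ => if ∃ k : ℕ, ∀ i, (d i : ℤ) = k * β i then 1 else 0)
  else
    (fun d : Fin 2 →₀ ℕ =>
      if ∃ k : ℕ, 1 ≤ k ∧ ∀ i, (d i : ℤ) = -(k * β i) then -1 else 0)

/-- The summand `w (1/((1-e^{-α₀})(1-e^{-α₁})))`, expanded via the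
highest-weight convention applied to each factor. -/
noncomputable def macdonaldTerm (w : (Matrix (Fin 2) (Fin 2) ℤ)ˣ) :
    MvPowerSeries (Fin 2) ℤ :=
  hwExpand (Matrix.vecMul ![1, 0] (w : Matrix (Fin 2) (Fin 2) ℤ)) *
    hwExpand (Matrix.vecMul ![0, 1] (w : Matrix (Fin 2) (Fin 2) ℤ))

/-! ### Auxiliary: explicit description of the infinite dihedral Weyl group -/

/-- The translation (rotation) part `(s₁ s₀)ⁿ` of the Weyl group. -/
def rhoM (n : ℤ) : (Matrix (Fin 2) (Fin 2) ℤ)ˣ :=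
  ⟨!![1+2*n, 2*n; -(2*n), 1-2*n], !![1-2*n, -(2*n); 2*n, 1+2*n],
    by rw [Matrix.mul_fin_two, Matrix.one_fin_two]; norm_num; ring_nf; simp,
    by rw [Matrix.mul_fin_two, Matrix.one_fin_two]; norm_num; ring_nf; simp⟩

/-- The reflections `s₀ (s₁ s₀)ⁿ` of the Weyl group. -/
def sigM (n : ℤ) : (Matrix (Fin 2) (Fin 2) ℤ)ˣ :=
  ⟨!![-1-2*n, -(2*n); 2+2*n, 1+2*n], !![-1-2*n, -(2*n); 2+2*n, 1+2*n],
    by rw [Matrix.mul_fin_two, Matrix.one_fin_two]; norm_num; ring_nf; simp,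
    by rw [Matrix.mul_fin_two, Matrix.one_fin_two]; norm_num; ring_nf; simp⟩

lemma rho_mul_rho (a b : ℤ) : rhoM a * rhoM b = rhoM (a+b) := by
  ext : 1
  show (rhoM a).val * (rhoM b).val = _
  simp only [rhoM, Matrix.mul_fin_two]
  norm_num; ring_nf; simp

lemma sig_mul_sig (a b : ℤ) : sigM a * sigM b = rhoM (b-a) := by
  ext : 1
  show (sigM a).val * (sigM b).val = _
  simp only [sigM, rhoM, Matrix.mul_fin_two]
  norm_num; ring_nf; simp

lemma sig_mul_rho (a b : ℤ) : sigM a * rhoM b = sigM (a+b) := by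
  ext : 1
  show (sigM a).val * (rhoM b).val = _
  simp only [sigM, rhoM, Matrix.mul_fin_two]
  norm_num; ring_nf; simp

lemma rho_mul_sig (a b : ℤ) : rhoM a * sigM b = sigM (b-a) := by
  ext : 1
  show (rhoM a).val * (sigM b).val = _
  simp only [sigM, rhoM, Matrix.mul_fin_two]
  norm_num; ring_nf; simp

lemma rho_zero : rhoM 0 = 1 := by
  ext : 1
  show (rhoM 0).val = 1
  simp only [rhoM, Matrix.one_fin_two]
  norm_num

lemma affS₀_eq : affS₀ = sigM 0 := by
  ext : 1; show (affS₀).val = (sigM 0).val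
  simp only [affS₀, sigM]; norm_num

lemma affS₁_eq : affS₁ = sigM (-1) := by
  ext : 1; show (affS₁).val = (sigM (-1)).val
  simp only [affS₁, sigM]; norm_num

/-- The infinite dihedral group, described explicitly. -/
def dihK : Subgroup (Matrix (Fin 2) (Fin 2) ℤ)ˣ where
  carrier := {u | (∃ n : ℤ, u = rhoM n) ∨ (∃ n : ℤ, u = sigM n)}
  one_mem' := Or.inl ⟨0, rho_zero.symm⟩
  mul_mem' := by
    rintro x y (⟨a, rfl⟩ | ⟨a, rfl⟩) (⟨b, rfl⟩ | ⟨b, rfl⟩)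
    · exact Or.inl ⟨a + b, rho_mul_rho a b⟩
    · exact Or.inr ⟨b - a, rho_mul_sig a b⟩
    · exact Or.inr ⟨a + b, sig_mul_rho a b⟩
    · exact Or.inl ⟨b - a, sig_mul_sig a b⟩
  inv_mem' := by
    rintro x (⟨a, rfl⟩ | ⟨a, rfl⟩)
    · exact Or.inl ⟨-a, by rw [eq_comm, eq_inv_iff_mul_eq_one, rho_mul_rho]; simpa using rho_zero⟩
    · exact Or.inr ⟨a, by rw [eq_comm, eq_inv_iff_mul_eq_one, sig_mul_sig]; simpa using rho_zero⟩

lemma mem_classify {w : (Matrix (Fin 2) (Fin 2) ℤ)ˣ}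
    (hw : w ∈ Subgroup.closure {affS₀, affS₁}) :
    (∃ n : ℤ, w = rhoM n) ∨ (∃ n : ℤ, w = sigM n) := by
  have : Subgroup.closure {affS₀, affS₁} ≤ dihK := by
    rw [Subgroup.closure_le]
    rintro x (rfl | rfl)
    · exact Or.inr ⟨0, affS₀_eq⟩
    · exact Or.inr ⟨-1, affS₁_eq⟩
  exact this hw

lemma rho_mem (n : ℤ) : rhoM n ∈ Subgroup.closure {affS₀, affS₁} := by
  have h0 : sigM 0 ∈ Subgroup.closure {affS₀, affS₁} := by
    rw [← affS₀_eq]; exact Subgroup.subset_closure (by simp)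
  have h1 : sigM (-1) ∈ Subgroup.closure {affS₀, affS₁} := by
    rw [← affS₁_eq]; exact Subgroup.subset_closure (by simp)
  have hr1 : rhoM 1 ∈ Subgroup.closure {affS₀, affS₁} := by
    have := Subgroup.mul_mem _ h1 h0
    rwa [sig_mul_sig, show (0 : ℤ) - (-1) = 1 by ring] at this
  have hrm1 : rhoM (-1) ∈ Subgroup.closure {affS₀, affS₁} := by
    have := Subgroup.mul_mem _ h0 h1
    rwa [sig_mul_sig, show (-1 : ℤ) - 0 = -1 by ring] at this
  induction n using Int.induction_on with
  | zero => rw [rho_zero]; exact Subgroup.one_mem _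
  | succ k ih =>
    rw [show (k : ℤ) + 1 = k + 1 from rfl, ← rho_mul_rho]
    exact Subgroup.mul_mem _ ih hr1
  | pred k ih =>
    rw [show -(k : ℤ) - 1 = -k + (-1) by ring, ← rho_mul_rho]
    exact Subgroup.mul_mem _ ih hrm1

lemma sig_mem (n : ℤ) : sigM n ∈ Subgroup.closure {affS₀, affS₁} := by
  have h0 : sigM 0 ∈ Subgroup.closure {affS₀, affS₁} := by
    rw [← affS₀_eq]; exact Subgroup.subset_closure (by simp)
  have := Subgroup.mul_mem _ h0 (rho_mem n)
  rwa [sig_mul_rho, zero_add] at this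

/-! ### Auxiliary: coefficients of the individual terms -/

open Classical in
lemma hw_pos_apply (a b : ℕ) (e : Fin 2 →₀ ℕ) :
    MvPowerSeries.coeff e (hwExpand ![(a : ℤ), (b : ℤ)]) =
      if ∃ k : ℕ, e 0 = k * a ∧ e 1 = k * b then 1 else 0 := by
  rw [MvPowerSeries.coeff_apply, hwExpand]
  erw [if_pos (show 0 ≤ ![(a : ℤ), (b : ℤ)] 0 ∧ 0 ≤ ![(a : ℤ), (b : ℤ)] 1 from by constructor <;> simp)]
  have : (∃ k : ℕ, ∀ i, (e i : ℤ) = k * (![(a : ℤ), (b : ℤ)]) i)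
      ↔ (∃ k : ℕ, e 0 = k * a ∧ e 1 = k * b) := by
    constructor
    · rintro ⟨k, hk⟩
      refine ⟨k, ?_, ?_⟩ <;> [have := hk 0; have := hk 1] <;> simp at this <;> exact_mod_cast this
    · rintro ⟨k, h0, h1⟩
      refine ⟨k, ?_⟩
      intro i
      fin_cases i <;> simp <;> exact_mod_cast ‹_›
  simp only [this]

open Classical in
lemma hw_neg_apply (a b : ℕ) (hab : a ≠ 0 ∨ b ≠ 0) (e : Fin 2 →₀ ℕ) :
    MvPowerSeries.coeff e (hwExpand ![-(a : ℤ), -(b : ℤ)]) =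
      if ∃ k : ℕ, 1 ≤ k ∧ e 0 = k * a ∧ e 1 = k * b then -1 else 0 := by
  rw [MvPowerSeries.coeff_apply, hwExpand]
  erw [if_neg (show ¬(0 ≤ ![-(a : ℤ), -(b : ℤ)] 0 ∧ 0 ≤ ![-(a : ℤ), -(b : ℤ)] 1) from by simp; omega)]
  have : (∃ k : ℕ, 1 ≤ k ∧ ∀ i, (e i : ℤ) = -(k * (![-(a : ℤ), -(b : ℤ)]) i))
      ↔ (∃ k : ℕ, 1 ≤ k ∧ e 0 = k * a ∧ e 1 = k * b) := by
    constructor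
    · rintro ⟨k, hk1, hk⟩
      refine ⟨k, hk1, ?_, ?_⟩ <;> [have := hk 0; have := hk 1] <;> simp at this <;>
        exact_mod_cast this
    · rintro ⟨k, hk1, h0, h1⟩
      refine ⟨k, hk1, ?_⟩
      intro i
      fin_cases i <;> simp <;> exact_mod_cast ‹_›
  simp only [this]

/-- Solvability predicate: the summand attached to the negative real root
`-(m+1, m)` contributes to the coefficient at `(p, q)`. -/
def Sol (m p q : ℕ) : Prop :=
  ∃ j k : ℕ, 1 ≤ j ∧ p = j * (m+1) + k * (m+2) ∧ q = j * m + k * (m+1)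

open Classical in
lemma coeff_T_gt (m : ℕ) (d : Fin 2 →₀ ℕ) :
    MvPowerSeries.coeff d
      (hwExpand ![-((m+1 : ℕ) : ℤ), -((m : ℕ) : ℤ)] *
        hwExpand ![((m+2 : ℕ) : ℤ), ((m+1 : ℕ) : ℤ)]) =
      if Sol m (d 0) (d 1) then -1 else 0 := by
  classical
  rw [MvPowerSeries.coeff_mul]
  have hrw : ∀ x ∈ Finset.HasAntidiagonal.antidiagonal d,
      MvPowerSeries.coeff x.1 (hwExpand ![-((m+1 : ℕ) : ℤ), -((m : ℕ) : ℤ)]) *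
        MvPowerSeries.coeff x.2 (hwExpand ![((m+2 : ℕ) : ℤ), ((m+1 : ℕ) : ℤ)]) =
      if (∃ j : ℕ, 1 ≤ j ∧ x.1 0 = j * (m+1) ∧ x.1 1 = j * m) ∧
          (∃ k : ℕ, x.2 0 = k * (m+2) ∧ x.2 1 = k * (m+1)) then -1 else 0 := by
    intro x _
    rw [hw_neg_apply (m+1) m (Or.inl (by omega)), hw_pos_apply (m+2) (m+1)]
    split_ifs <;> simp_all
  rw [Finset.sum_congr rfl hrw]
  by_cases H : Sol m (d 0) (d 1)
  · obtain ⟨j, k, hj, h0, h1⟩ := H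
    set e₁ : Fin 2 →₀ ℕ := Finsupp.equivFunOnFinite.symm ![j*(m+1), j*m] with he₁
    set e₂ : Fin 2 →₀ ℕ := Finsupp.equivFunOnFinite.symm ![k*(m+2), k*(m+1)] with he₂
    have he₁0 : e₁ 0 = j*(m+1) := rfl
    have he₁1 : e₁ 1 = j*m := rfl
    have he₂0 : e₂ 0 = k*(m+2) := rfl
    have he₂1 : e₂ 1 = k*(m+1) := rfl
    have hmem : (e₁, e₂) ∈ Finset.HasAntidiagonal.antidiagonal d := by
      rw [Finset.HasAntidiagonal.mem_antidiagonal]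
      ext i
      fin_cases i
      · show e₁ 0 + e₂ 0 = d 0
        omega
      · show e₁ 1 + e₂ 1 = d 1
        omega
    rw [Finset.sum_eq_single_of_mem (e₁, e₂) hmem ?uniq]
    · rw [if_pos ⟨⟨j, hj, he₁0, he₁1⟩, ⟨k, he₂0, he₂1⟩⟩,
        if_pos ⟨j, k, hj, h0, h1⟩]
    case uniq =>
      intro x hx hne
      rw [if_neg]
      rintro ⟨⟨j', hj', hx10, hx11⟩, ⟨k', hx20, hx21⟩⟩
      apply hne
      rw [Finset.HasAntidiagonal.mem_antidiagonal] at hx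
      have hd0 : d 0 = x.1 0 + x.2 0 := by rw [← hx]; rfl
      have hd1 : d 1 = x.1 1 + x.2 1 := by rw [← hx]; rfl
      have hsum : j + k = j' + k' := by
        have a1 : d 0 = d 1 + (j + k) := by rw [h0, h1]; ring
        have a2 : d 0 = d 1 + (j' + k') := by
          rw [hd0, hd1, hx10, hx11, hx20, hx21]; ring
        omega
      have hkk : k = k' := by
        have b1 : d 1 = (j+k)*m + k := by rw [h1]; ring
        have b2 : d 1 = (j+k)*m + k' := by
          rw [hd1, hx11, hx21, hsum]; ring
        exact Nat.add_left_cancel (b1.symm.trans b2)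
      have hjj : j = j' := by omega
      have hx1 : x.1 = e₁ := by
        ext i; fin_cases i
        · show x.1 0 = e₁ 0; rw [hx10, he₁0, hjj]
        · show x.1 1 = e₁ 1; rw [hx11, he₁1, hjj]
      have hx2 : x.2 = e₂ := by
        ext i; fin_cases i
        · show x.2 0 = e₂ 0; rw [hx20, he₂0, hkk]
        · show x.2 1 = e₂ 1; rw [hx21, he₂1, hkk]
      exact Prod.ext hx1 hx2
  · rw [if_neg H]
    apply Finset.sum_eq_zero
    intro x hx
    rw [if_neg]
    rintro ⟨⟨j', hj', hx10, hx11⟩, ⟨k', hx20, hx21⟩⟩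
    rw [Finset.HasAntidiagonal.mem_antidiagonal] at hx
    exact H ⟨j', k', hj', by rw [← hx]; show x.1 0 + x.2 0 = _; omega,
      by rw [← hx]; show x.1 1 + x.2 1 = _; omega⟩

open Classical in
lemma coeff_T_lt (m : ℕ) (d : Fin 2 →₀ ℕ) :
    MvPowerSeries.coeff d
      (hwExpand ![-((m : ℕ) : ℤ), -((m+1 : ℕ) : ℤ)] *
        hwExpand ![((m+1 : ℕ) : ℤ), ((m+2 : ℕ) : ℤ)]) =
      if Sol m (d 1) (d 0) then -1 else 0 := by
  classical
  rw [MvPowerSeries.coeff_mul]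
  have hrw : ∀ x ∈ Finset.HasAntidiagonal.antidiagonal d,
      MvPowerSeries.coeff x.1 (hwExpand ![-((m : ℕ) : ℤ), -((m+1 : ℕ) : ℤ)]) *
        MvPowerSeries.coeff x.2 (hwExpand ![((m+1 : ℕ) : ℤ), ((m+2 : ℕ) : ℤ)]) =
      if (∃ j : ℕ, 1 ≤ j ∧ x.1 0 = j * m ∧ x.1 1 = j * (m+1)) ∧
          (∃ k : ℕ, x.2 0 = k * (m+1) ∧ x.2 1 = k * (m+2)) then -1 else 0 := by
    intro x _
    rw [hw_neg_apply m (m+1) (Or.inr (by omega)), hw_pos_apply (m+1) (m+2)]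
    split_ifs <;> simp_all
  rw [Finset.sum_congr rfl hrw]
  by_cases H : Sol m (d 1) (d 0)
  · obtain ⟨j, k, hj, h1, h0⟩ := H
    set e₁ : Fin 2 →₀ ℕ := Finsupp.equivFunOnFinite.symm ![j*m, j*(m+1)] with he₁
    set e₂ : Fin 2 →₀ ℕ := Finsupp.equivFunOnFinite.symm ![k*(m+1), k*(m+2)] with he₂
    have he₁0 : e₁ 0 = j*m := rfl
    have he₁1 : e₁ 1 = j*(m+1) := rfl
    have he₂0 : e₂ 0 = k*(m+1) := rfl
    have he₂1 : e₂ 1 = k*(m+2) := rfl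
    have hmem : (e₁, e₂) ∈ Finset.HasAntidiagonal.antidiagonal d := by
      rw [Finset.HasAntidiagonal.mem_antidiagonal]
      ext i
      fin_cases i
      · show e₁ 0 + e₂ 0 = d 0
        omega
      · show e₁ 1 + e₂ 1 = d 1
        omega
    rw [Finset.sum_eq_single_of_mem (e₁, e₂) hmem ?uniq]
    · rw [if_pos ⟨⟨j, hj, he₁0, he₁1⟩, ⟨k, he₂0, he₂1⟩⟩,
        if_pos ⟨j, k, hj, h1, h0⟩]
    case uniq =>
      intro x hx hne
      rw [if_neg]
      rintro ⟨⟨j', hj', hx10, hx11⟩, ⟨k', hx20, hx21⟩⟩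
      apply hne
      rw [Finset.HasAntidiagonal.mem_antidiagonal] at hx
      have hd0 : d 0 = x.1 0 + x.2 0 := by rw [← hx]; rfl
      have hd1 : d 1 = x.1 1 + x.2 1 := by rw [← hx]; rfl
      have hsum : j + k = j' + k' := by
        have a1 : d 1 = d 0 + (j + k) := by rw [h0, h1]; ring
        have a2 : d 1 = d 0 + (j' + k') := by
          rw [hd0, hd1, hx10, hx11, hx20, hx21]; ring
        omega
      have hkk : k = k' := by
        have b1 : d 0 = (j+k)*m + k := by rw [h0]; ring
        have b2 : d 0 = (j+k)*m + k' := by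
          rw [hd0, hx10, hx20, hsum]; ring
        exact Nat.add_left_cancel (b1.symm.trans b2)
      have hjj : j = j' := by omega
      have hx1 : x.1 = e₁ := by
        ext i; fin_cases i
        · show x.1 0 = e₁ 0; rw [hx10, he₁0, hjj]
        · show x.1 1 = e₁ 1; rw [hx11, he₁1, hjj]
      have hx2 : x.2 = e₂ := by
        ext i; fin_cases i
        · show x.2 0 = e₂ 0; rw [hx20, he₂0, hkk]
        · show x.2 1 = e₂ 1; rw [hx21, he₂1, hkk]
      exact Prod.ext hx1 hx2
  · rw [if_neg H]
    apply Finset.sum_eq_zero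
    intro x hx
    rw [if_neg]
    rintro ⟨⟨j', hj', hx10, hx11⟩, ⟨k', hx20, hx21⟩⟩
    rw [Finset.HasAntidiagonal.mem_antidiagonal] at hx
    exact H ⟨j', k', hj', by rw [← hx]; show x.1 1 + x.2 1 = _; omega,
      by rw [← hx]; show x.1 0 + x.2 0 = _; omega⟩

lemma sol_iff (m p q : ℕ) : Sol m p q ↔ q < p ∧ m = q / (p - q) := by
  constructor
  · rintro ⟨j, k, hj, h0, h1⟩
    have hD : p = q + (j + k) := by rw [h0, h1]; ring
    have hq : q = (j+k) * m + k := by rw [h1]; ring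
    have hlt : q < p := by omega
    refine ⟨hlt, ?_⟩
    have hpq : p - q = j + k := by omega
    rw [hpq, hq, Nat.mul_add_div (by omega), Nat.div_eq_of_lt (by omega)]
    omega
  · rintro ⟨hlt, hm⟩
    subst hm
    set D := p - q with hD
    set r := q % D with hr
    set s := q / D with hs
    have h1 : D * s + r = q := Nat.div_add_mod q D
    have h2 : r < D := Nat.mod_lt q (by omega)
    have key1 : (D - r) * s + r * (s+1) = D * s + r := by
      zify [Nat.le_of_lt h2]; ring
    have key2 : (D - r) * (s+1) + r * (s+2) = D * s + r + D := by
      zify [Nat.le_of_lt h2]; ring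
    exact ⟨D - r, r, by omega, by omega, by omega⟩

lemma vecMul0 (M : Matrix (Fin 2) (Fin 2) ℤ) :
    Matrix.vecMul ![1, 0] M = ![M 0 0, M 0 1] := by
  funext i
  fin_cases i <;>
    simp [Matrix.vecMul, dotProduct, Fin.sum_univ_two]

lemma vecMul1 (M : Matrix (Fin 2) (Fin 2) ℤ) :
    Matrix.vecMul ![0, 1] M = ![M 1 0, M 1 1] := by
  funext i
  fin_cases i <;>
    simp [Matrix.vecMul, dotProduct, Fin.sum_univ_two]

open Classical in
lemma coeff_term_rho_pos (t : ℕ) (d : Fin 2 →₀ ℕ) :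
    MvPowerSeries.coeff d (macdonaldTerm (rhoM ((t : ℤ)+1))) =
      if Sol (2*t+1) (d 0) (d 1) then -1 else 0 := by
  have h0 : Matrix.vecMul ![1, 0] (rhoM ((t : ℤ)+1) : Matrix (Fin 2) (Fin 2) ℤ) =
      ![((2*t+1+2 : ℕ) : ℤ), ((2*t+1+1 : ℕ) : ℤ)] := by
    rw [vecMul0]; funext i; fin_cases i <;> simp [rhoM] <;> push_cast <;> ring
  have h1 : Matrix.vecMul ![0, 1] (rhoM ((t : ℤ)+1) : Matrix (Fin 2) (Fin 2) ℤ) =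
      ![-((2*t+1+1 : ℕ) : ℤ), -((2*t+1 : ℕ) : ℤ)] := by
    rw [vecMul1]; funext i; fin_cases i <;> simp [rhoM] <;> push_cast <;> ring
  unfold macdonaldTerm
  rw [h0, h1, mul_comm]
  exact coeff_T_gt (2*t+1) d

open Classical in
lemma coeff_term_sig_pos (t : ℕ) (d : Fin 2 →₀ ℕ) :
    MvPowerSeries.coeff d (macdonaldTerm (sigM (t : ℤ))) =
      if Sol (2*t) (d 0) (d 1) then -1 else 0 := by
  have h0 : Matrix.vecMul ![1, 0] (sigM (t : ℤ) : Matrix (Fin 2) (Fin 2) ℤ) =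
      ![-((2*t+1 : ℕ) : ℤ), -((2*t : ℕ) : ℤ)] := by
    rw [vecMul0]; funext i; fin_cases i <;> simp [sigM] <;> push_cast <;> ring
  have h1 : Matrix.vecMul ![0, 1] (sigM (t : ℤ) : Matrix (Fin 2) (Fin 2) ℤ) =
      ![((2*t+2 : ℕ) : ℤ), ((2*t+1 : ℕ) : ℤ)] := by
    rw [vecMul1]; funext i; fin_cases i <;> simp [sigM] <;> push_cast <;> ring
  unfold macdonaldTerm
  rw [h0, h1]
  exact coeff_T_gt (2*t) d

open Classical in
lemma coeff_term_rho_neg (t : ℕ) (d : Fin 2 →₀ ℕ) :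
    MvPowerSeries.coeff d (macdonaldTerm (rhoM (-((t : ℤ)+1)))) =
      if Sol (2*t+1) (d 1) (d 0) then -1 else 0 := by
  have h0 : Matrix.vecMul ![1, 0] (rhoM (-((t : ℤ)+1)) : Matrix (Fin 2) (Fin 2) ℤ) =
      ![-((2*t+1 : ℕ) : ℤ), -((2*t+1+1 : ℕ) : ℤ)] := by
    rw [vecMul0]; funext i; fin_cases i <;> simp [rhoM] <;> push_cast <;> ring
  have h1 : Matrix.vecMul ![0, 1] (rhoM (-((t : ℤ)+1)) : Matrix (Fin 2) (Fin 2) ℤ) =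
      ![((2*t+1+1 : ℕ) : ℤ), ((2*t+1+2 : ℕ) : ℤ)] := by
    rw [vecMul1]; funext i; fin_cases i <;> simp [rhoM] <;> push_cast <;> ring
  unfold macdonaldTerm
  rw [h0, h1]
  exact coeff_T_lt (2*t+1) d

open Classical in
lemma coeff_term_sig_neg (t : ℕ) (d : Fin 2 →₀ ℕ) :
    MvPowerSeries.coeff d (macdonaldTerm (sigM (-((t : ℤ)+1)))) =
      if Sol (2*t) (d 1) (d 0) then -1 else 0 := by
  have h0 : Matrix.vecMul ![1, 0] (sigM (-((t : ℤ)+1)) : Matrix (Fin 2) (Fin 2) ℤ) =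
      ![((2*t+1 : ℕ) : ℤ), ((2*t+2 : ℕ) : ℤ)] := by
    rw [vecMul0]; funext i; fin_cases i <;> simp [sigM] <;> push_cast <;> ring
  have h1 : Matrix.vecMul ![0, 1] (sigM (-((t : ℤ)+1)) : Matrix (Fin 2) (Fin 2) ℤ) =
      ![-((2*t : ℕ) : ℤ), -((2*t+1 : ℕ) : ℤ)] := by
    rw [vecMul1]; funext i; fin_cases i <;> simp [sigM] <;> push_cast <;> ring
  unfold macdonaldTerm
  rw [h0, h1, mul_comm]
  exact coeff_T_lt (2*t) d

open Classical in
lemma coeff_term_one (d : Fin 2 →₀ ℕ) :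
    MvPowerSeries.coeff d (macdonaldTerm 1) = 1 := by
  classical
  have h0 : Matrix.vecMul ![1, 0] ((1 : (Matrix (Fin 2) (Fin 2) ℤ)ˣ) :
      Matrix (Fin 2) (Fin 2) ℤ) = ![((1 : ℕ) : ℤ), ((0 : ℕ) : ℤ)] := by
    rw [vecMul0]; funext i; fin_cases i <;> simp
  have h1 : Matrix.vecMul ![0, 1] ((1 : (Matrix (Fin 2) (Fin 2) ℤ)ˣ) :
      Matrix (Fin 2) (Fin 2) ℤ) = ![((0 : ℕ) : ℤ), ((1 : ℕ) : ℤ)] := by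
    rw [vecMul1]; funext i; fin_cases i <;> simp
  unfold macdonaldTerm
  rw [h0, h1, MvPowerSeries.coeff_mul]
  have hrw : ∀ x ∈ Finset.HasAntidiagonal.antidiagonal d,
      MvPowerSeries.coeff x.1 (hwExpand ![((1 : ℕ) : ℤ), ((0 : ℕ) : ℤ)]) *
        MvPowerSeries.coeff x.2 (hwExpand ![((0 : ℕ) : ℤ), ((1 : ℕ) : ℤ)]) =
      if x.1 1 = 0 ∧ x.2 0 = 0 then 1 else 0 := by
    intro x _
    rw [hw_pos_apply 1 0, hw_pos_apply 0 1]
    have e1 : (∃ k : ℕ, x.1 0 = k * 1 ∧ x.1 1 = k * 0) ↔ x.1 1 = 0 :=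
      ⟨fun ⟨k, _, h⟩ => by omega, fun h => ⟨x.1 0, by omega, by omega⟩⟩
    have e2 : (∃ k : ℕ, x.2 0 = k * 0 ∧ x.2 1 = k * 1) ↔ x.2 0 = 0 :=
      ⟨fun ⟨k, h, _⟩ => by omega, fun h => ⟨x.2 1, by omega, by omega⟩⟩
    rw [e1, e2]
    split_ifs <;> simp_all
  rw [Finset.sum_congr rfl hrw]
  set e₁ : Fin 2 →₀ ℕ := Finsupp.equivFunOnFinite.symm ![d 0, 0] with he₁
  set e₂ : Fin 2 →₀ ℕ := Finsupp.equivFunOnFinite.symm ![0, d 1] with he₂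
  have he₁0 : e₁ 0 = d 0 := rfl
  have he₁1 : e₁ 1 = 0 := rfl
  have he₂0 : e₂ 0 = 0 := rfl
  have he₂1 : e₂ 1 = d 1 := rfl
  have hmem : (e₁, e₂) ∈ Finset.HasAntidiagonal.antidiagonal d := by
    rw [Finset.HasAntidiagonal.mem_antidiagonal]
    ext i
    fin_cases i
    · show e₁ 0 + e₂ 0 = d 0
      omega
    · show e₁ 1 + e₂ 1 = d 1
      omega
  rw [Finset.sum_eq_single_of_mem (e₁, e₂) hmem ?uniq]
  · rw [if_pos ⟨he₁1, he₂0⟩]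
  case uniq =>
    intro x hx hne
    rw [if_neg]
    rintro ⟨hA, hB⟩
    apply hne
    rw [Finset.HasAntidiagonal.mem_antidiagonal] at hx
    have hd0 : d 0 = x.1 0 + x.2 0 := by rw [← hx]; rfl
    have hd1 : d 1 = x.1 1 + x.2 1 := by rw [← hx]; rfl
    have hx1 : x.1 = e₁ := by
      ext i; fin_cases i
      · show x.1 0 = e₁ 0; omega
      · show x.1 1 = e₁ 1; omega
    have hx2 : x.2 = e₂ := by
      ext i; fin_cases i
      · show x.2 0 = e₂ 0; omega
      · show x.2 1 = e₂ 1; omega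
    exact Prod.ext hx1 hx2

open Classical in
lemma support_classify (d : Fin 2 →₀ ℕ)
    (w : ↥(Subgroup.closure {affS₀, affS₁}))
    (hw : MvPowerSeries.coeff d
      (macdonaldTerm (w : (Matrix (Fin 2) (Fin 2) ℤ)ˣ)) ≠ 0) :
    (w : (Matrix (Fin 2) (Fin 2) ℤ)ˣ) = 1 ∨
    (∃ t : ℕ, (w : (Matrix (Fin 2) (Fin 2) ℤ)ˣ) = rhoM ((t:ℤ)+1) ∧ Sol (2*t+1) (d 0) (d 1)) ∨
    (∃ t : ℕ, (w : (Matrix (Fin 2) (Fin 2) ℤ)ˣ) = sigM (t:ℤ) ∧ Sol (2*t) (d 0) (d 1)) ∨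
    (∃ t : ℕ, (w : (Matrix (Fin 2) (Fin 2) ℤ)ˣ) = rhoM (-((t:ℤ)+1)) ∧ Sol (2*t+1) (d 1) (d 0)) ∨
    (∃ t : ℕ, (w : (Matrix (Fin 2) (Fin 2) ℤ)ˣ) = sigM (-((t:ℤ)+1)) ∧ Sol (2*t) (d 1) (d 0)) := by
  rcases mem_classify w.2 with ⟨n, hn⟩ | ⟨n, hn⟩
  · obtain ⟨t, rfl | rfl⟩ := Int.eq_nat_or_neg n
    · cases t with
      | zero =>
        left; rw [hn, show ((0:ℕ):ℤ) = 0 from rfl, rho_zero]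
      | succ t' =>
        right; left
        have hcast : ((t'+1 : ℕ) : ℤ) = (t' : ℤ) + 1 := by push_cast; ring
        have hw' : MvPowerSeries.coeff d (macdonaldTerm (rhoM ((t':ℤ)+1))) ≠ 0 := by
          rw [← hcast, ← hn]; exact hw
        rw [coeff_term_rho_pos] at hw'
        refine ⟨t', by rw [hn, hcast], ?_⟩
        by_contra hS
        rw [if_neg hS] at hw'
        exact hw' rfl
    · cases t with
      | zero =>
        left; rw [hn, show -((0:ℕ):ℤ) = 0 from rfl, rho_zero]
      | succ t' =>
        right; right; right; left
        have hcast : -((t'+1 : ℕ) : ℤ) = -((t' : ℤ) + 1) := by push_cast; ring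
        have hw' : MvPowerSeries.coeff d (macdonaldTerm (rhoM (-((t':ℤ)+1)))) ≠ 0 := by
          rw [← hcast, ← hn]; exact hw
        rw [coeff_term_rho_neg] at hw'
        refine ⟨t', by rw [hn, hcast], ?_⟩
        by_contra hS
        rw [if_neg hS] at hw'
        exact hw' rfl
  · obtain ⟨t, rfl | rfl⟩ := Int.eq_nat_or_neg n
    · right; right; left
      have hw' : MvPowerSeries.coeff d (macdonaldTerm (sigM (t:ℤ))) ≠ 0 := by
        rw [← hn]; exact hw
      rw [coeff_term_sig_pos] at hw'
      refine ⟨t, hn, ?_⟩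
      by_contra hS
      rw [if_neg hS] at hw'
      exact hw' rfl
    · cases t with
      | zero =>
        right; right; left
        have hc : -((0:ℕ):ℤ) = ((0:ℕ):ℤ) := by norm_num
        have hw' : MvPowerSeries.coeff d (macdonaldTerm (sigM ((0:ℕ):ℤ))) ≠ 0 := by
          rw [← hc, ← hn]; exact hw
        rw [coeff_term_sig_pos] at hw'
        refine ⟨0, by rw [hn, hc], ?_⟩
        by_contra hS
        rw [if_neg hS] at hw'
        exact hw' rfl
      | succ t' =>
        right; right; right; right
        have hcast : -((t'+1 : ℕ) : ℤ) = -((t' : ℤ) + 1) := by push_cast; ring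
        have hw' : MvPowerSeries.coeff d (macdonaldTerm (sigM (-((t':ℤ)+1)))) ≠ 0 := by
          rw [← hcast, ← hn]; exact hw
        rw [coeff_term_sig_neg] at hw'
        refine ⟨t', by rw [hn, hcast], ?_⟩
        by_contra hS
        rw [if_neg hS] at hw'
        exact hw' rfl


/-- Rank-2 multiplicity-free Macdonald identity for affine `sl₂`:
`∑_{w ∈ W} w (1/((1-e^{-α₀})(1-e^{-α₁}))) = 1 + ∑_{n ≥ 1} e^{-nδ}` with
`δ = α₀ + α₁`, i.e. coefficientwise in `ℤ[[x, y]]`: for every exponent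
`d = (p, q)`, the (finitely supported) sum over `w ∈ W` of the coefficients of
`x^p y^q` in the summands equals `1` if `p = q` and `0` otherwise. -/
theorem multiplicity_free_macdonald_affine_sl2 :
    ∀ d : Fin 2 →₀ ℕ,
      (∑ᶠ w : Subgroup.closure {affS₀, affS₁},
          MvPowerSeries.coeff d (macdonaldTerm (w : (Matrix (Fin 2) (Fin 2) ℤ)ˣ))) =
        if d 0 = d 1 then 1 else 0 := by
  classical
  intro d
  rcases lt_trichotomy (d 0) (d 1) with hlt | heq | hgt
  · -- d 0 < d 1
    have hSol : Sol (d 0 / (d 1 - d 0)) (d 1) (d 0) :=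
      (sol_iff _ _ _).2 ⟨hlt, rfl⟩
    rcases Nat.even_or_odd (d 0 / (d 1 - d 0)) with ⟨t, ht⟩ | ⟨t, ht⟩
    · -- even : the reflection sigM (-(t+1)) contributes
      set w₀ : ↥(Subgroup.closure {affS₀, affS₁}) := ⟨sigM (-((t:ℤ)+1)), sig_mem _⟩ with hw₀
      have hone_ne : (1 : ↥(Subgroup.closure {affS₀, affS₁})) ≠ w₀ := by
        intro h
        have h2 := congrArg
          (fun w : ↥(Subgroup.closure {affS₀, affS₁}) =>
            ((w : (Matrix (Fin 2) (Fin 2) ℤ)ˣ) : Matrix (Fin 2) (Fin 2) ℤ) 0 1) h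
        simp [hw₀, sigM, Matrix.one_apply] at h2
        omega
      have hsupp : Function.support (fun w : ↥(Subgroup.closure {affS₀, affS₁}) =>
          MvPowerSeries.coeff d (macdonaldTerm (w : (Matrix (Fin 2) (Fin 2) ℤ)ˣ)))
          ⊆ ↑({1, w₀} : Finset ↥(Subgroup.closure {affS₀, affS₁})) := by
        intro w hw
        simp only [Function.mem_support] at hw
        simp only [Finset.coe_insert, Set.mem_insert_iff, Finset.coe_singleton,
          Set.mem_singleton_iff]
        rcases support_classify d w hw with h1 | ⟨t',h,hs⟩ | ⟨t',h,hs⟩ | ⟨t',h,hs⟩ | ⟨t',h,hs⟩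
        · left; exact Subtype.ext h1
        · exfalso; exact absurd ((sol_iff _ _ _).1 hs).1 (by omega)
        · exfalso; exact absurd ((sol_iff _ _ _).1 hs).1 (by omega)
        · exfalso
          have h2 := ((sol_iff _ _ _).1 hs).2
          omega
        · right
          have h2 := ((sol_iff _ _ _).1 hs).2
          have : t' = t := by omega
          subst this
          exact Subtype.ext h
      rw [finsum_eq_sum_of_support_subset _ hsupp, Finset.sum_pair hone_ne]
      have hf1 : MvPowerSeries.coeff d
          (macdonaldTerm ((1 : ↥(Subgroup.closure {affS₀, affS₁})) :
            (Matrix (Fin 2) (Fin 2) ℤ)ˣ)) = 1 := coeff_term_one d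
      have hfw : MvPowerSeries.coeff d
          (macdonaldTerm ((w₀ : ↥(Subgroup.closure {affS₀, affS₁})) :
            (Matrix (Fin 2) (Fin 2) ℤ)ˣ)) = -1 := by
        rw [show (w₀ : (Matrix (Fin 2) (Fin 2) ℤ)ˣ) = sigM (-((t:ℤ)+1)) from rfl,
          coeff_term_sig_neg, if_pos (show Sol (2*t) (d 1) (d 0) from by
            rw [show 2*t = d 0 / (d 1 - d 0) from by omega]; exact hSol)]
      rw [hf1, hfw, if_neg (by omega)]
      ring
    · -- odd : the rotation rhoM (-(t+1)) contributes
      set w₀ : ↥(Subgroup.closure {affS₀, affS₁}) := ⟨rhoM (-((t:ℤ)+1)), rho_mem _⟩ with hw₀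
      have hone_ne : (1 : ↥(Subgroup.closure {affS₀, affS₁})) ≠ w₀ := by
        intro h
        have h2 := congrArg
          (fun w : ↥(Subgroup.closure {affS₀, affS₁}) =>
            ((w : (Matrix (Fin 2) (Fin 2) ℤ)ˣ) : Matrix (Fin 2) (Fin 2) ℤ) 0 1) h
        simp [hw₀, rhoM, Matrix.one_apply] at h2
        omega
      have hsupp : Function.support (fun w : ↥(Subgroup.closure {affS₀, affS₁}) =>
          MvPowerSeries.coeff d (macdonaldTerm (w : (Matrix (Fin 2) (Fin 2) ℤ)ˣ)))
          ⊆ ↑({1, w₀} : Finset ↥(Subgroup.closure {affS₀, affS₁})) := by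
        intro w hw
        simp only [Function.mem_support] at hw
        simp only [Finset.coe_insert, Set.mem_insert_iff, Finset.coe_singleton,
          Set.mem_singleton_iff]
        rcases support_classify d w hw with h1 | ⟨t',h,hs⟩ | ⟨t',h,hs⟩ | ⟨t',h,hs⟩ | ⟨t',h,hs⟩
        · left; exact Subtype.ext h1
        · exfalso; exact absurd ((sol_iff _ _ _).1 hs).1 (by omega)
        · exfalso; exact absurd ((sol_iff _ _ _).1 hs).1 (by omega)
        · right
          have h2 := ((sol_iff _ _ _).1 hs).2
          have : t' = t := by omega
          subst this
          exact Subtype.ext h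
        · exfalso
          have h2 := ((sol_iff _ _ _).1 hs).2
          omega
      rw [finsum_eq_sum_of_support_subset _ hsupp, Finset.sum_pair hone_ne]
      have hf1 : MvPowerSeries.coeff d
          (macdonaldTerm ((1 : ↥(Subgroup.closure {affS₀, affS₁})) :
            (Matrix (Fin 2) (Fin 2) ℤ)ˣ)) = 1 := coeff_term_one d
      have hfw : MvPowerSeries.coeff d
          (macdonaldTerm ((w₀ : ↥(Subgroup.closure {affS₀, affS₁})) :
            (Matrix (Fin 2) (Fin 2) ℤ)ˣ)) = -1 := by
        rw [show (w₀ : (Matrix (Fin 2) (Fin 2) ℤ)ˣ) = rhoM (-((t:ℤ)+1)) from rfl,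
          coeff_term_rho_neg, if_pos (show Sol (2*t+1) (d 1) (d 0) from by
            rw [show 2*t+1 = d 0 / (d 1 - d 0) from by omega]; exact hSol)]
      rw [hf1, hfw, if_neg (by omega)]
      ring
  · -- d 0 = d 1 : only the identity contributes
    have hsupp : Function.support (fun w : ↥(Subgroup.closure {affS₀, affS₁}) =>
        MvPowerSeries.coeff d (macdonaldTerm (w : (Matrix (Fin 2) (Fin 2) ℤ)ˣ)))
        ⊆ ↑({1} : Finset ↥(Subgroup.closure {affS₀, affS₁})) := by
      intro w hw
      simp only [Function.mem_support] at hw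
      simp only [Finset.coe_singleton, Set.mem_singleton_iff]
      rcases support_classify d w hw with h1 | ⟨t',h,hs⟩ | ⟨t',h,hs⟩ | ⟨t',h,hs⟩ | ⟨t',h,hs⟩
      · exact Subtype.ext h1
      all_goals exact absurd ((sol_iff _ _ _).1 hs).1 (by omega)
    rw [finsum_eq_sum_of_support_subset _ hsupp, Finset.sum_singleton]
    rw [show ((1 : ↥(Subgroup.closure {affS₀, affS₁})) :
        (Matrix (Fin 2) (Fin 2) ℤ)ˣ) = 1 from rfl, coeff_term_one, if_pos heq]
  · -- d 1 < d 0
    have hSol : Sol (d 1 / (d 0 - d 1)) (d 0) (d 1) :=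
      (sol_iff _ _ _).2 ⟨hgt, rfl⟩
    rcases Nat.even_or_odd (d 1 / (d 0 - d 1)) with ⟨t, ht⟩ | ⟨t, ht⟩
    · -- even : sigM t contributes
      set w₀ : ↥(Subgroup.closure {affS₀, affS₁}) := ⟨sigM (t:ℤ), sig_mem _⟩ with hw₀
      have hone_ne : (1 : ↥(Subgroup.closure {affS₀, affS₁})) ≠ w₀ := by
        intro h
        have h2 := congrArg
          (fun w : ↥(Subgroup.closure {affS₀, affS₁}) =>
            ((w : (Matrix (Fin 2) (Fin 2) ℤ)ˣ) : Matrix (Fin 2) (Fin 2) ℤ) 0 0) h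
        simp [hw₀, sigM, Matrix.one_apply] at h2
        omega
      have hsupp : Function.support (fun w : ↥(Subgroup.closure {affS₀, affS₁}) =>
          MvPowerSeries.coeff d (macdonaldTerm (w : (Matrix (Fin 2) (Fin 2) ℤ)ˣ)))
          ⊆ ↑({1, w₀} : Finset ↥(Subgroup.closure {affS₀, affS₁})) := by
        intro w hw
        simp only [Function.mem_support] at hw
        simp only [Finset.coe_insert, Set.mem_insert_iff, Finset.coe_singleton,
          Set.mem_singleton_iff]
        rcases support_classify d w hw with h1 | ⟨t',h,hs⟩ | ⟨t',h,hs⟩ | ⟨t',h,hs⟩ | ⟨t',h,hs⟩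
        · left; exact Subtype.ext h1
        · exfalso
          have h2 := ((sol_iff _ _ _).1 hs).2
          omega
        · right
          have h2 := ((sol_iff _ _ _).1 hs).2
          have : t' = t := by omega
          subst this
          exact Subtype.ext h
        · exfalso; exact absurd ((sol_iff _ _ _).1 hs).1 (by omega)
        · exfalso; exact absurd ((sol_iff _ _ _).1 hs).1 (by omega)
      rw [finsum_eq_sum_of_support_subset _ hsupp, Finset.sum_pair hone_ne]
      have hf1 : MvPowerSeries.coeff d
          (macdonaldTerm ((1 : ↥(Subgroup.closure {affS₀, affS₁})) :
            (Matrix (Fin 2) (Fin 2) ℤ)ˣ)) = 1 := coeff_term_one d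
      have hfw : MvPowerSeries.coeff d
          (macdonaldTerm ((w₀ : ↥(Subgroup.closure {affS₀, affS₁})) :
            (Matrix (Fin 2) (Fin 2) ℤ)ˣ)) = -1 := by
        rw [show (w₀ : (Matrix (Fin 2) (Fin 2) ℤ)ˣ) = sigM (t:ℤ) from rfl,
          coeff_term_sig_pos, if_pos (show Sol (2*t) (d 0) (d 1) from by
            rw [show 2*t = d 1 / (d 0 - d 1) from by omega]; exact hSol)]
      rw [hf1, hfw, if_neg (by omega)]
      ring
    · -- odd : rhoM (t+1) contributes
      set w₀ : ↥(Subgroup.closure {affS₀, affS₁}) := ⟨rhoM ((t:ℤ)+1), rho_mem _⟩ with hw₀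
      have hone_ne : (1 : ↥(Subgroup.closure {affS₀, affS₁})) ≠ w₀ := by
        intro h
        have h2 := congrArg
          (fun w : ↥(Subgroup.closure {affS₀, affS₁}) =>
            ((w : (Matrix (Fin 2) (Fin 2) ℤ)ˣ) : Matrix (Fin 2) (Fin 2) ℤ) 0 1) h
        simp [hw₀, rhoM, Matrix.one_apply] at h2
        omega
      have hsupp : Function.support (fun w : ↥(Subgroup.closure {affS₀, affS₁}) =>
          MvPowerSeries.coeff d (macdonaldTerm (w : (Matrix (Fin 2) (Fin 2) ℤ)ˣ)))
          ⊆ ↑({1, w₀} : Finset ↥(Subgroup.closure {affS₀, affS₁})) := by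
        intro w hw
        simp only [Function.mem_support] at hw
        simp only [Finset.coe_insert, Set.mem_insert_iff, Finset.coe_singleton,
          Set.mem_singleton_iff]
        rcases support_classify d w hw with h1 | ⟨t',h,hs⟩ | ⟨t',h,hs⟩ | ⟨t',h,hs⟩ | ⟨t',h,hs⟩
        · left; exact Subtype.ext h1
        · right
          have h2 := ((sol_iff _ _ _).1 hs).2
          have : t' = t := by omega
          subst this
          exact Subtype.ext h
        · exfalso
          have h2 := ((sol_iff _ _ _).1 hs).2
          omega
        · exfalso; exact absurd ((sol_iff _ _ _).1 hs).1 (by omega)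
        · exfalso; exact absurd ((sol_iff _ _ _).1 hs).1 (by omega)
      rw [finsum_eq_sum_of_support_subset _ hsupp, Finset.sum_pair hone_ne]
      have hf1 : MvPowerSeries.coeff d
          (macdonaldTerm ((1 : ↥(Subgroup.closure {affS₀, affS₁})) :
            (Matrix (Fin 2) (Fin 2) ℤ)ˣ)) = 1 := coeff_term_one d
      have hfw : MvPowerSeries.coeff d
          (macdonaldTerm ((w₀ : ↥(Subgroup.closure {affS₀, affS₁})) :
            (Matrix (Fin 2) (Fin 2) ℤ)ˣ)) = -1 := by
        rw [show (w₀ : (Matrix (Fin 2) (Fin 2) ℤ)ˣ) = rhoM ((t:ℤ)+1) from rfl,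
          coeff_term_rho_pos, if_pos (show Sol (2*t+1) (d 0) (d 1) from by
            rw [show 2*t+1 = d 1 / (d 0 - d 1) from by omega]; exact hSol)]
      rw [hf1, hfw, if_neg (by omega)]
      ring
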